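/- Let K be a field with char K ≠ 2, a, b ∈ K nonzero, and let σ be the K-automorphism of the rational function field K(x,y) defined by σ(x) = a/x, σ(y) = b/y. Setting u = (x − a/x)/(xy − ab/(xy)) and v = (y − b/y)/(xy − ab/(xy)), the fixed field K(x,y)^⟨σ⟩ equals K(u,v). -/

import Mathlib

/-- The rational function field in two variables `x, y` over `K`. -/
noncomputable abbrev RatFunc2 (K : Type*) [Field K] : Type _ :=
  FractionRing (MvPolynomial (Fin 2) K)

/-- The fixed intermediate field of a single algebra automorphism. -/
def AlgEquiv.fixedIF {K E : Type*} [Field K] [Field E] [Algebra K E]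
    (σ : E ≃ₐ[K] E) : IntermediateField K E where
  carrier := {z | σ z = z}
  mul_mem' {p q} hp hq := by
    simp only [Set.mem_setOf_eq] at *
    rw [map_mul, hp, hq]
  add_mem' {p q} hp hq := by
    simp only [Set.mem_setOf_eq] at *
    rw [map_add, hp, hq]
  inv_mem' p hp := by
    simp only [Set.mem_setOf_eq] at *
    rw [map_inv₀, hp]
  algebraMap_mem' := σ.commutes

open IntermediateField in
set_option maxHeartbeats 1000000 in
theorem stmt_6 (K : Type*) [Field K] (hK2 : ringChar K ≠ 2)
    (a b : K) (ha : a ≠ 0) (hb : b ≠ 0)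
    (x y u v : RatFunc2 K)
    (hx : x = algebraMap (MvPolynomial (Fin 2) K) (RatFunc2 K) (MvPolynomial.X 0))
    (hy : y = algebraMap (MvPolynomial (Fin 2) K) (RatFunc2 K) (MvPolynomial.X 1))
    (σ : RatFunc2 K ≃ₐ[K] RatFunc2 K)
    (hσx : σ x = algebraMap K (RatFunc2 K) a / x)
    (hσy : σ y = algebraMap K (RatFunc2 K) b / y)
    (hu : u = (x - algebraMap K (RatFunc2 K) a / x) /
      (x * y - algebraMap K (RatFunc2 K) (a * b) / (x * y)))
    (hv : v = (y - algebraMap K (RatFunc2 K) b / y) /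
      (x * y - algebraMap K (RatFunc2 K) (a * b) / (x * y))) :
    ∀ z : RatFunc2 K, σ z = z ↔ z ∈ IntermediateField.adjoin K {u, v} := by
  set R := MvPolynomial (Fin 2) K with hR
  set φ := algebraMap (MvPolynomial (Fin 2) K) (RatFunc2 K) with hφ
  set ι := algebraMap K (RatFunc2 K) with hι
  have hinj : Function.Injective φ := IsFractionRing.injective (MvPolynomial (Fin 2) K) (RatFunc2 K)
  have hcomp : ∀ c : K, ι c = φ (MvPolynomial.C c) := by
    intro c
    rw [hι, hφ, IsScalarTower.algebraMap_apply K (MvPolynomial (Fin 2) K) (RatFunc2 K), MvPolynomial.algebraMap_eq]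
  -- basic nonvanishing
  have hxne : x ≠ 0 := by
    rw [hx]
    exact (map_ne_zero_iff φ hinj).mpr (MvPolynomial.X_ne_zero 0)
  have hyne : y ≠ 0 := by
    rw [hy]
    exact (map_ne_zero_iff φ hinj).mpr (MvPolynomial.X_ne_zero 1)
  have hx2 : x * x ≠ ι a := by
    rw [hx, hcomp, ← map_mul]
    intro h
    have h2 := hinj h
    have h3 := congrArg (MvPolynomial.coeff (Finsupp.single (0 : Fin 2) 2)) h2
    rw [show (MvPolynomial.X (0 : Fin 2) : R) * MvPolynomial.X 0 = MvPolynomial.X 0 ^ 2 by ring]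
      at h3
    simp [MvPolynomial.coeff_X_pow, MvPolynomial.coeff_C, Finsupp.single_eq_zero, eq_comm] at h3
  have hy2 : y * y ≠ ι b := by
    rw [hy, hcomp, ← map_mul]
    intro h
    have h2 := hinj h
    have h3 := congrArg (MvPolynomial.coeff (Finsupp.single (1 : Fin 2) 2)) h2
    rw [show (MvPolynomial.X (1 : Fin 2) : R) * MvPolynomial.X 1 = MvPolynomial.X 1 ^ 2 by ring]
      at h3
    simp [MvPolynomial.coeff_X_pow, MvPolynomial.coeff_C, Finsupp.single_eq_zero, eq_comm] at h3
  have hxy2 : (x * y) * (x * y) ≠ ι (a * b) := by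
    rw [hx, hy, hcomp, ← map_mul, ← map_mul]
    intro h
    have h2 := hinj h
    have h3 := congrArg
      (MvPolynomial.coeff (Finsupp.single (0 : Fin 2) 2 + Finsupp.single (1 : Fin 2) 2)) h2
    rw [show (MvPolynomial.X (0 : Fin 2) : R) * MvPolynomial.X 1 *
        (MvPolynomial.X 0 * MvPolynomial.X 1) =
        MvPolynomial.monomial (Finsupp.single (0 : Fin 2) 2) 1 *
        MvPolynomial.monomial (Finsupp.single (1 : Fin 2) 2) 1 by
      rw [← MvPolynomial.X_pow_eq_monomial, ← MvPolynomial.X_pow_eq_monomial]; ring] at h3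
    rw [MvPolynomial.monomial_mul] at h3
    have hcond : (Finsupp.single (0 : Fin 2) 2 + Finsupp.single (1 : Fin 2) 2) ≠ 0 := by
      intro hh
      have h4 := congrArg (fun f => f (0 : Fin 2)) hh
      simp at h4
    have hcond' : ¬((0 : Fin 2 →₀ ℕ) = Finsupp.single (0 : Fin 2) 2 + Finsupp.single (1 : Fin 2) 2) :=
      fun hh => hcond hh.symm
    simp [MvPolynomial.coeff_monomial, MvPolynomial.coeff_C, hcond, hcond'] at h3
  -- derived nonvanishing
  have hιa : ι a ≠ 0 := fun h => ha (by simpa using (RingHom.injective ι) (by simpa using h))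
  have hιb : ι b ≠ 0 := fun h => hb (by simpa using (RingHom.injective ι) (by simpa using h))
  have hιab : ι (a * b) ≠ 0 := by rw [map_mul]; exact mul_ne_zero hιa hιb
  have hD : x * y - ι (a * b) / (x * y) ≠ 0 := by
    intro h
    apply hxy2
    rw [map_mul]
    field_simp at h
    linear_combination h + map_mul ι a b
  have hNu : x - ι a / x ≠ 0 := by
    intro h
    apply hx2
    field_simp at h
    linear_combination h
  have hNv : y - ι b / y ≠ 0 := by
    intro h
    apply hy2
    field_simp at h
    linear_combination h
  have hune : u ≠ 0 := hu ▸ div_ne_zero hNu hD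
  have hvne : v ≠ 0 := hv ▸ div_ne_zero hNv hD
  -- σ fixes u and v
  have e1 : ι a / (ι a / x) = x := by
    rw [div_div_eq_mul_div, mul_comm, mul_div_assoc, div_self hιa, mul_one]
  have e1b : ι b / (ι b / y) = y := by
    rw [div_div_eq_mul_div, mul_comm, mul_div_assoc, div_self hιb, mul_one]
  have e2 : (ι a / x) * (ι b / y) = ι (a * b) / (x * y) := by
    rw [map_mul, div_mul_div_comm]
  have e3 : ι (a * b) / (ι (a * b) / (x * y)) = x * y := by
    rw [div_div_eq_mul_div, mul_comm, mul_div_assoc, div_self hιab, mul_one]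
  have hσa : σ (ι a) = ι a := σ.commutes a
  have hσb : σ (ι b) = ι b := σ.commutes b
  have hab : ι (a * b) = ι a * ι b := map_mul ι a b
  have e2' : ι a / x * (ι b / y) = ι a * ι b / (x * y) := div_mul_div_comm _ _ _ _
  have e3' : ι a * ι b / (ι a * ι b / (x * y)) = x * y := by
    rw [← hab]
    exact e3
  have hσu : σ u = u := by
    rw [hu]
    simp only [map_div₀, map_sub, map_mul, hσx, hσy, hσa, hσb]
    rw [e1, e2', e3']
    rw [← neg_sub x (ι a / x), ← neg_sub (x * y) (ι a * ι b / (x * y)), neg_div_neg_eq]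
  have hσv : σ v = v := by
    rw [hv]
    simp only [map_div₀, map_sub, map_mul, hσx, hσy, hσa, hσb]
    rw [e1b, e2', e3']
    rw [← neg_sub y (ι b / y), ← neg_sub (x * y) (ι a * ι b / (x * y)), neg_div_neg_eq]
  -- key identities
  have hDclear : x * y * (x * y) - ι (a * b) ≠ 0 := sub_ne_zero.mpr hxy2
  have hxa : x * x - ι a ≠ 0 := sub_ne_zero.mpr hx2
  have hyb : y * y - ι b ≠ 0 := sub_ne_zero.mpr hy2
  have hDclear' : x * y * (x * y) - ι a * ι b ≠ 0 := by rw [← map_mul]; exact hDclear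
  have hDalt : x * y - ι (a * b) / (x * y) = (x * y * (x * y) - ι a * ι b) / (x * y) := by
    rw [eq_div_iff (mul_ne_zero hxne hyne), sub_mul,
      div_mul_cancel₀ _ (mul_ne_zero hxne hyne), map_mul]
  have hNalt : x - ι a / x = (x * x - ι a) / x := by
    rw [eq_div_iff hxne, sub_mul, div_mul_cancel₀ _ hxne]
  have hNalt' : y - ι b / y = (y * y - ι b) / y := by
    rw [eq_div_iff hyne, sub_mul, div_mul_cancel₀ _ hyne]
  have hu2 : u = (x * x - ι a) * y / (x * y * (x * y) - ι a * ι b) := by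
    rw [hu, hNalt, hDalt, div_div_div_comm, div_mul_cancel_left₀ hxne, div_inv_eq_mul,
      div_mul_eq_mul_div]
  have hv2 : v = (y * y - ι b) * x / (x * y * (x * y) - ι a * ι b) := by
    rw [hv, hNalt', hDalt, mul_comm x y, div_div_div_comm, div_mul_cancel_left₀ hyne,
      div_inv_eq_mul, div_mul_eq_mul_div]
  have hD3 : y ^ 2 * x ^ 2 - ι b * ι a ≠ 0 := by
    intro h0; apply hDclear'; linear_combination h0
  have I1 : (1 - v * x) * y = ι b * u := by
    rw [hu2, hv2]
    field_simp
    ring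
  have I3 : 1 - v * x ≠ 0 := by
    intro h0
    have h1 : ι b * u = 0 := by rw [← I1, h0, zero_mul]
    rcases mul_eq_zero.mp h1 with h2 | h2
    exacts [hιb h2, hune h2]
  have I2 : v * (x * x) - (1 + ι a * (v * v) - ι b * (u * u)) * x + ι a * v = 0 := by
    rw [hu2, hv2]
    field_simp
    ring
  -- the target field
  set F := IntermediateField.adjoin K {u, v} with hF
  have huF : u ∈ F := IntermediateField.subset_adjoin K {u, v} (Set.mem_insert u {v})
  have hvF : v ∈ F := IntermediateField.subset_adjoin K {u, v}
    (Set.mem_insert_of_mem u rfl)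
  have hFfix : ∀ w ∈ F, σ w = w := by
    have hle : F ≤ σ.fixedIF := by
      rw [hF, IntermediateField.adjoin_le_iff]
      intro t ht
      rcases ht with rfl | ht
      · exact hσu
      · rw [Set.mem_singleton_iff] at ht
        subst ht
        exact hσv
    intro w hw
    exact hle hw
  have hιF : ∀ c : K, ι c ∈ F := fun c => F.algebraMap_mem c
  -- the quadratic coefficient
  set cE : RatFunc2 K := (1 + ι a * (v * v) - ι b * (u * u)) / v with hcE
  have hcF : cE ∈ F := by
    rw [hcE]
    exact div_mem (sub_mem (add_mem (one_mem F) (mul_mem (hιF a) (mul_mem hvF hvF)))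
      (mul_mem (hιF b) (mul_mem huF huF))) hvF
  have hquad : x * x = cE * x - ι a := by
    rw [hcE]
    field_simp
    linear_combination I2
  -- x and y generate everything over K
  have hpoly : ∀ p : MvPolynomial (Fin 2) K, φ p ∈ IntermediateField.adjoin K {x, y} := by
    intro p
    induction p using MvPolynomial.induction_on with
    | C c =>
      rw [← hcomp c]
      exact (IntermediateField.adjoin K {x, y}).algebraMap_mem c
    | add p q hp hq =>
      rw [map_add]
      exact add_mem hp hq
    | mul_X p i hp =>
      rw [map_mul]
      refine mul_mem hp ?_
      fin_cases i
      · exact hx ▸ IntermediateField.subset_adjoin K {x, y} (Set.mem_insert x {y})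
      · exact hy ▸ IntermediateField.subset_adjoin K {x, y} (Set.mem_insert_of_mem x rfl)
  have hadjtop : ∀ w : RatFunc2 K, w ∈ IntermediateField.adjoin K {x, y} := by
    intro w
    obtain ⟨p, q, -, rfl⟩ := IsFractionRing.div_surjective (A := MvPolynomial (Fin 2) K) w
    exact div_mem (hpoly p) (hpoly q)
  -- everything lies in F(x)
  have hxFx : x ∈ F⟮x⟯ := IntermediateField.mem_adjoin_simple_self F x
  have hmemFx : ∀ w ∈ F, w ∈ F⟮x⟯ := by
    intro w hw
    have h1 : algebraMap F (RatFunc2 K) ⟨w, hw⟩ ∈ F⟮x⟯ := F⟮x⟯.algebraMap_mem ⟨w, hw⟩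
    exact h1
  have hyF : y = ι b * u / (1 - v * x) := by
    rw [eq_div_iff I3]
    linear_combination I1
  have hyFx : y ∈ F⟮x⟯ := by
    rw [hyF]
    exact div_mem (mul_mem (hmemFx _ (hιF b)) (hmemFx _ huF))
      (sub_mem (one_mem _) (mul_mem (hmemFx _ hvF) hxFx))
  have hEx : ∀ w : RatFunc2 K, w ∈ F⟮x⟯ := by
    intro w
    have h1 : IntermediateField.adjoin K {x, y} ≤ (F⟮x⟯).restrictScalars K := by
      rw [IntermediateField.adjoin_le_iff]
      intro t ht
      rcases ht with rfl | ht
      · exact hxFx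
      · rw [Set.mem_singleton_iff] at ht
        subst ht
        exact hyFx
    exact h1 (hadjtop w)
  -- x is integral of degree ≤ 2 over F
  have hxint : IsIntegral F x := by
    refine ⟨Polynomial.X ^ 2 - (Polynomial.C (⟨cE, hcF⟩ : F) * Polynomial.X +
      Polynomial.C (-(⟨ι a, hιF a⟩ : F))), ?_, ?_⟩
    · refine Polynomial.monic_X_pow_sub (lt_of_le_of_lt Polynomial.degree_linear_le ?_)
      norm_num
    · have hca : algebraMap F (RatFunc2 K) ⟨cE, hcF⟩ = cE := rfl
      have haa : algebraMap F (RatFunc2 K) (-(⟨ι a, hιF a⟩ : F)) = -(ι a) := rfl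
      simp only [Polynomial.eval₂_sub, Polynomial.eval₂_add, Polynomial.eval₂_mul,
        Polynomial.eval₂_pow, Polynomial.eval₂_X, Polynomial.eval₂_C, hca, haa]
      linear_combination hquad
  -- representation of elements of F(x)
  have hrep : ∀ w, w ∈ Algebra.adjoin F ({x} : Set (RatFunc2 K)) →
      ∃ p q, p ∈ F ∧ q ∈ F ∧ w = p + q * x := by
    intro w hw
    induction hw using Algebra.adjoin_induction with
    | mem t ht =>
      rw [Set.mem_singleton_iff] at ht
      subst ht
      exact ⟨0, 1, zero_mem F, one_mem F, by ring⟩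
    | algebraMap r =>
      exact ⟨r, 0, r.2, zero_mem F, by simp⟩
    | add s t hs ht ihs iht =>
      obtain ⟨p, q, hp, hq, rfl⟩ := ihs
      obtain ⟨p', q', hp', hq', rfl⟩ := iht
      exact ⟨p + p', q + q', add_mem hp hp', add_mem hq hq', by ring⟩
    | mul s t hs ht ihs iht =>
      obtain ⟨p, q, hp, hq, rfl⟩ := ihs
      obtain ⟨p', q', hp', hq', rfl⟩ := iht
      refine ⟨p * p' + q * q' * (0 - ι a), p * q' + q * p' + q * q' * cE,
        add_mem (mul_mem hp hp') (mul_mem (mul_mem hq hq') (sub_mem (zero_mem F) (hιF a))),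
        add_mem (add_mem (mul_mem hp hq') (mul_mem hq hp')) (mul_mem (mul_mem hq hq') hcF),
        ?_⟩
      linear_combination (q * q') * hquad
  -- the final equivalence
  intro z
  constructor
  · intro hz
    have hzmem : z ∈ Algebra.adjoin F ({x} : Set (RatFunc2 K)) := by
      have h1 := hEx z
      rwa [← IntermediateField.mem_toSubalgebra,
        IntermediateField.adjoin_simple_toSubalgebra_of_isAlgebraic hxint.isAlgebraic] at h1
    obtain ⟨p, q, hpF, hqF, hzeq⟩ := hrep z hzmem
    have hσp : σ p = p := hFfix p hpF
    have hσq : σ q = q := hFfix q hqF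
    by_cases hq0 : q = 0
    · rw [hzeq, hq0, zero_mul, add_zero]
      exact hpF
    · exfalso
      rw [hzeq, map_add, map_mul, hσp, hσq, hσx] at hz
      have h6 : ι a / x = x := mul_left_cancel₀ hq0 (by linear_combination hz)
      rw [div_eq_iff hxne] at h6
      exact hx2 (by linear_combination -h6)
  · intro hzF
    exact hFfix z hzF
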